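/- arXiv:1807.02650 — 3 statements merged into one kernel-verified Lean document; each statement's English description precedes it below -/
import Mathlib

section
/- Let C be a weak model category, p : X → Y a fibration between fibrant objects, and i : A → B a cofibration between cofibrant objects. Then p has the right lifting property against i if and only if p has the weak right lifting property against i. -/
open CategoryTheory CategoryTheory.Limits

universe w v u

namespace WMC

variable {C : Type u} [Category.{v} C]

/-- An object is cofibrant when the map from the initial object is a cofibration. -/
def Cofibrant [HasInitial C] (Cof : MorphismProperty C) (X : C) : Prop :=
  Cof (initial.to X)

/-- An object is fibrant when the map to the terminal object is a fibration. -/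
def Fibrant [HasTerminal C] (Fib : MorphismProperty C) (X : C) : Prop :=
  Fib (terminal.from X)

/-- The axioms for a class of cofibrations. -/
structure IsCofClass [HasInitial C] (Cof : MorphismProperty C) : Prop where
  initial_cofibrant : Cofibrant Cof (⊥_ C)
  iso_mem : ∀ {X Y : C} (f : X ⟶ Y), IsIso f → Cofibrant Cof X → Cof f
  comp_mem : ∀ {X Y Z : C} (f : X ⟶ Y) (g : Y ⟶ Z), Cof f → Cof g → Cof (f ≫ g)
  pushout_mem : ∀ {A B X : C} (i : A ⟶ B) (f : A ⟶ X), Cof i → Cofibrant Cof A →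
    Cofibrant Cof X →
    ∃ (P : C) (inl : X ⟶ P) (inr : B ⟶ P), IsPushout f i inl inr ∧ Cof inl

/-- The axioms for a class of fibrations (a class of cofibrations on `Cᵒᵖ`). -/
structure IsFibClass [HasTerminal C] (Fib : MorphismProperty C) : Prop where
  terminal_fibrant : Fibrant Fib (⊤_ C)
  iso_mem : ∀ {X Y : C} (f : X ⟶ Y), IsIso f → Fibrant Fib Y → Fib f
  comp_mem : ∀ {X Y Z : C} (f : X ⟶ Y) (g : Y ⟶ Z), Fib f → Fib g → Fib (f ≫ g)
  pullback_mem : ∀ {A B X : C} (p : B ⟶ A) (f : X ⟶ A), Fib p → Fibrant Fib A →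
    Fibrant Fib X →
    ∃ (P : C) (fst : P ⟶ X) (snd : P ⟶ B), IsPullback fst snd f p ∧ Fib fst

variable [HasInitial C] [HasTerminal C]

/-- Acyclic fibration: a fibration with the right lifting property against all
cofibrations between cofibrant objects. -/
def IsAcyclicFib (Cof Fib : MorphismProperty C) {X Y : C} (p : X ⟶ Y) : Prop :=
  Fib p ∧ ∀ {A B : C} (i : A ⟶ B), Cof i → Cofibrant Cof A → Cofibrant Cof B →
    HasLiftingProperty i p

/-- Acyclic cofibration: a cofibration with the left lifting property against all
fibrations between fibrant objects. -/
def IsAcyclicCof (Cof Fib : MorphismProperty C) {A B : C} (i : A ⟶ B) : Prop :=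
  Cof i ∧ ∀ {X Y : C} (p : X ⟶ Y), Fib p → Fibrant Fib X → Fibrant Fib Y →
    HasLiftingProperty i p

/-- A relative strong cylinder object for a cofibration `i : A ⟶ B`: a factorization
`B ⊔_A B ⟶ I_A B ⟶ B` of the codiagonal, with the first map a cofibration whose
precomposition with the first coprojection is an acyclic cofibration. -/
structure RelStrongCylinder (Cof Fib : MorphismProperty C) {A B : C} (i : A ⟶ B) where
  BB : C
  in₀ : B ⟶ BB
  in₁ : B ⟶ BB
  isPushout : IsPushout i i in₀ in₁
  Cyl : C
  ι : BB ⟶ Cyl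
  ρ : Cyl ⟶ B
  ι_cof : Cof ι
  in₀_ι_acyclic : IsAcyclicCof Cof Fib (in₀ ≫ ι)
  fac₀ : in₀ ≫ ι ≫ ρ = 𝟙 B
  fac₁ : in₁ ≫ ι ≫ ρ = 𝟙 B

/-- A relative strong path object for a fibration `q : Y ⟶ X`: a factorization
`Y ⟶ P_X Y ⟶ Y ×_X Y` of the relative diagonal, with the second map a fibration whose
postcomposition with the first projection is an acyclic fibration. -/
structure RelStrongPath (Cof Fib : MorphismProperty C) {X Y : C} (q : Y ⟶ X) where
  YY : C
  pr₀ : YY ⟶ Y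
  pr₁ : YY ⟶ Y
  isPullback : IsPullback pr₀ pr₁ q q
  Pth : C
  π : Pth ⟶ YY
  σ : Y ⟶ Pth
  π_fib : Fib π
  π_pr₀_acyclic : IsAcyclicFib Cof Fib (π ≫ pr₀)
  fac₀ : σ ≫ π ≫ pr₀ = 𝟙 Y
  fac₁ : σ ≫ π ≫ pr₁ = 𝟙 Y

/-- A weak model category: a class of cofibrations and a class of fibrations satisfying
the factorization axiom, the cylinder axiom and the path object axiom. -/
structure IsWeakModel (Cof Fib : MorphismProperty C) : Prop where
  cofClass : IsCofClass Cof
  fibClass : IsFibClass Fib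
  factor_cof_afib : ∀ {X Y : C} (f : X ⟶ Y), Cofibrant Cof X → Fibrant Fib Y →
    ∃ (Z : C) (i : X ⟶ Z) (q : Z ⟶ Y), Cof i ∧ IsAcyclicFib Cof Fib q ∧ i ≫ q = f
  factor_acof_fib : ∀ {X Y : C} (f : X ⟶ Y), Cofibrant Cof X → Fibrant Fib Y →
    ∃ (Z : C) (i : X ⟶ Z) (q : Z ⟶ Y), IsAcyclicCof Cof Fib i ∧ Fib q ∧ i ≫ q = f
  cylinder : ∀ {A B : C} (i : A ⟶ B), Cof i → Cofibrant Cof A → Fibrant Fib B →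
    Nonempty (RelStrongCylinder Cof Fib i)
  pathObj : ∀ {X Y : C} (q : Y ⟶ X), Fib q → Cofibrant Cof Y → Fibrant Fib X →
    Nonempty (RelStrongPath Cof Fib q)

/-- A relative weak cylinder object for a cofibration `i : A ⟶ B`. -/
structure RelWeakCylinder (Cof Fib : MorphismProperty C) {A B : C} (i : A ⟶ B) where
  BB : C
  in₀ : B ⟶ BB
  in₁ : B ⟶ BB
  isPushout : IsPushout i i in₀ in₁
  Cyl : C
  D : C
  ι : BB ⟶ Cyl
  ρ : Cyl ⟶ D
  e : B ⟶ D
  ι_cof : Cof ι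
  in₀_ι_acyclic : IsAcyclicCof Cof Fib (in₀ ≫ ι)
  e_acyclic : IsAcyclicCof Cof Fib e
  fac₀ : in₀ ≫ ι ≫ ρ = e
  fac₁ : in₁ ≫ ι ≫ ρ = e

/-- The weak right lifting property of `f : X ⟶ Y` against a cofibration `i : A ⟶ B`:
every commutative square admits a filler `v` making the upper triangle commute and the
lower triangle commute up to a homotopy relative to `A`, i.e. the map
`(f ∘ v, y) : B ⊔_A B ⟶ Y` factors through `B ⊔_A B ⟶ I_A B` for some relative weak
cylinder object for `i`. -/
def WeakRLP (Cof Fib : MorphismProperty C) {X Y A B : C} (f : X ⟶ Y) (i : A ⟶ B) : Prop :=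
  ∀ (x : A ⟶ X) (y : B ⟶ Y), x ≫ f = i ≫ y →
    ∃ v : B ⟶ X, i ≫ v = x ∧
      ∃ (W : RelWeakCylinder Cof Fib i) (h : W.Cyl ⟶ Y),
        W.in₀ ≫ W.ι ≫ h = v ≫ f ∧ W.in₁ ≫ W.ι ≫ h = y

lemma cofibrant_of_cof {Cof : MorphismProperty C} (hC : IsCofClass Cof) {X Y : C}
    {f : X ⟶ Y} (hf : Cof f) (hX : Cofibrant Cof X) : Cofibrant Cof Y := by
  have h : initial.to Y = initial.to X ≫ f := initial.hom_ext _ _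
  unfold Cofibrant
  rw [h]
  exact hC.comp_mem _ _ hX hf

lemma fibrant_of_fib {Fib : MorphismProperty C} (hF : IsFibClass Fib) {X Y : C}
    {f : X ⟶ Y} (hf : Fib f) (hY : Fibrant Fib Y) : Fibrant Fib X := by
  have h : terminal.from X = f ≫ terminal.from Y := terminal.hom_ext _ _
  unfold Fibrant
  rw [h]
  exact hF.comp_mem _ _ hf hY

/-- Key lemma: if `j` is a cofibration, `q` an acyclic fibration, and `j ≫ q` an
acyclic cofibration (with the relevant objects cofibrant/fibrant), then `j` is an
acyclic cofibration. -/
lemma acyclicCof_of_comp {Cof Fib : MorphismProperty C} (hWM : IsWeakModel Cof Fib)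
    {B Z D : C} (j : B ⟶ Z) (q : Z ⟶ D)
    (hj : Cof j) (hq : IsAcyclicFib Cof Fib q) (hjq : IsAcyclicCof Cof Fib (j ≫ q))
    (hB : Cofibrant Cof B) (hZc : Cofibrant Cof Z) (hZf : Fibrant Fib Z)
    (hDc : Cofibrant Cof D) :
    IsAcyclicCof Cof Fib j := by
  -- a section `s : D ⟶ Z` of `q` with `(j ≫ q) ≫ s = j`
  haveI : HasLiftingProperty (j ≫ q) q := hq.2 (j ≫ q) hjq.1 hB hDc
  have sq_s : CommSq j (j ≫ q) q (𝟙 D) := ⟨by simp⟩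
  obtain ⟨s, hs1, hs2⟩ : ∃ s : D ⟶ Z, (j ≫ q) ≫ s = j ∧ s ≫ q = 𝟙 D :=
    ⟨sq_s.lift, sq_s.fac_left, sq_s.fac_right⟩
  -- a relative strong cylinder for `j`
  obtain ⟨S⟩ := hWM.cylinder j hj hB hZf
  -- `S.BB` is cofibrant
  obtain ⟨P, inl, inr, hPO, hinl⟩ := hWM.cofClass.pushout_mem j j hj hB hZc
  have hPc : Cofibrant Cof P := cofibrant_of_cof hWM.cofClass hinl hZc
  have hφψ : Cof S.in₀ := by
    have hφ : Cof (hPO.desc S.in₀ S.in₁ S.isPushout.w) := by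
      refine hWM.cofClass.iso_mem _ ?_ hPc
      refine ⟨S.isPushout.desc inl inr hPO.w, ?_, ?_⟩
      · exact hPO.hom_ext (by simp) (by simp)
      · exact S.isPushout.hom_ext (by simp) (by simp)
    have : inl ≫ hPO.desc S.in₀ S.in₁ S.isPushout.w = S.in₀ := hPO.inl_desc _ _ _
    rw [← this]
    exact hWM.cofClass.comp_mem _ _ hinl hφ
  have hBBc : Cofibrant Cof S.BB := cofibrant_of_cof hWM.cofClass hφψ hZc
  have hCylc : Cofibrant Cof S.Cyl := cofibrant_of_cof hWM.cofClass S.ι_cof hBBc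
  -- the map `T = (q ≫ s, 𝟙) : S.BB ⟶ Z`
  have hT : j ≫ (q ≫ s) = j ≫ 𝟙 Z := by
    rw [← Category.assoc, hs1]; simp
  set T : S.BB ⟶ Z := S.isPushout.desc (q ≫ s) (𝟙 Z) hT with hTdef
  have hT0 : S.in₀ ≫ T = q ≫ s := S.isPushout.inl_desc _ _ _
  have hT1 : S.in₁ ≫ T = 𝟙 Z := S.isPushout.inr_desc _ _ _
  -- the homotopy `H : S.Cyl ⟶ Z` between `𝟙` and `q ≫ s`
  haveI : HasLiftingProperty S.ι q := hq.2 S.ι S.ι_cof hBBc hCylc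
  have sq_H : CommSq T S.ι q (S.ρ ≫ q) := by
    constructor
    refine S.isPushout.hom_ext ?_ ?_
    · rw [← Category.assoc, hT0, Category.assoc, hs2, Category.comp_id,
        ← Category.assoc, ← Category.assoc, Category.assoc S.in₀ S.ι S.ρ, S.fac₀]
      simp
    · rw [← Category.assoc, hT1, Category.id_comp,
        ← Category.assoc, ← Category.assoc, Category.assoc S.in₁ S.ι S.ρ, S.fac₁]
      simp
  obtain ⟨H, hH1, hH2⟩ : ∃ H : S.Cyl ⟶ Z, S.ι ≫ H = T ∧ H ≫ q = S.ρ ≫ q :=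
    ⟨sq_H.lift, sq_H.fac_left, sq_H.fac_right⟩
  -- now prove `j` is an acyclic cofibration
  refine ⟨hj, fun {X' Y'} p' hp' hX' hY' => ?_⟩
  constructor
  intro u vv sq
  haveI := hjq.2 p' hp' hX' hY'
  have sq1 : CommSq u (j ≫ q) p' (s ≫ vv) := by
    constructor
    rw [sq.w]
    conv_rhs => rw [← Category.assoc, hs1]
  obtain ⟨m, hm1, hm2⟩ : ∃ m : D ⟶ X', (j ≫ q) ≫ m = u ∧ m ≫ p' = s ≫ vv :=
    ⟨sq1.lift, sq1.fac_left, sq1.fac_right⟩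
  haveI := S.in₀_ι_acyclic.2 p' hp' hX' hY'
  have sq2 : CommSq (q ≫ m) (S.in₀ ≫ S.ι) p' (H ≫ vv) := by
    constructor
    rw [Category.assoc, hm2]
    conv_rhs => rw [Category.assoc, ← Category.assoc S.ι H vv, hH1, ← Category.assoc,
      hT0, Category.assoc]
  obtain ⟨K, hK1, hK2⟩ : ∃ K : S.Cyl ⟶ X', (S.in₀ ≫ S.ι) ≫ K = q ≫ m ∧ K ≫ p' = H ≫ vv :=
    ⟨sq2.lift, sq2.fac_left, sq2.fac_right⟩
  constructor
  refine ⟨⟨S.in₁ ≫ S.ι ≫ K, ?_, ?_⟩⟩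
  · have hw : j ≫ S.in₀ = j ≫ S.in₁ := S.isPushout.w
    rw [← Category.assoc, ← Category.assoc, ← hw, Category.assoc, Category.assoc,
      ← Category.assoc S.in₀ S.ι K, hK1, ← Category.assoc, hm1]
  · rw [Category.assoc, Category.assoc, hK2, ← Category.assoc S.ι H vv,
      hH1, ← Category.assoc, hT1]
    simp

/-- a fibration between fibrant objects has the right lifting property
against a cofibration between cofibrant objects iff it has the weak right lifting
property against it. -/
theorem statement13 (Cof Fib : MorphismProperty C) (hWM : IsWeakModel Cof Fib)
    {X Y A B : C} (p : X ⟶ Y) (i : A ⟶ B)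
    (hp : Fib p) (hX : Fibrant Fib X) (hY : Fibrant Fib Y)
    (hi : Cof i) (hA : Cofibrant Cof A) (hB : Cofibrant Cof B) :
    HasLiftingProperty i p ↔ WeakRLP Cof Fib p i := by
  constructor
  · intro hlift x y hxy
    haveI := hlift
    have sq : CommSq x i p y := ⟨hxy⟩
    obtain ⟨v, hv1, hv2⟩ : ∃ v : B ⟶ X, i ≫ v = x ∧ v ≫ p = y :=
      ⟨sq.lift, sq.fac_left, sq.fac_right⟩
    -- fibrant replacement of `B`
    obtain ⟨D, e, q', he, hq', heq⟩ :=
      hWM.factor_acof_fib (terminal.from B) hB hWM.fibClass.terminal_fibrant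
    have hDf : Fibrant Fib D := by
      have : terminal.from D = q' := terminal.hom_ext _ _
      unfold Fibrant; rw [this]; exact hq'
    have hDc : Cofibrant Cof D := cofibrant_of_cof hWM.cofClass he.1 hB
    -- the pushout `B ⊔_A B`
    obtain ⟨BB, in₀, in₁, hPO, hin₀⟩ := hWM.cofClass.pushout_mem i i hi hA hB
    have hBBc : Cofibrant Cof BB := cofibrant_of_cof hWM.cofClass hin₀ hB
    -- the map `(e, e) : BB ⟶ D` factored as cofibration + acyclic fibration
    set w : BB ⟶ D := hPO.desc e e rfl with hwdef
    obtain ⟨Cyl, ι, ρ, hι, hρ, hιρ⟩ := hWM.factor_cof_afib w hBBc hDf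
    have hCylc : Cofibrant Cof Cyl := cofibrant_of_cof hWM.cofClass hι hBBc
    have hCylf : Fibrant Fib Cyl := fibrant_of_fib hWM.fibClass hρ.1 hDf
    have hfac0 : in₀ ≫ ι ≫ ρ = e := by rw [hιρ]; exact hPO.inl_desc _ _ _
    have hfac1 : in₁ ≫ ι ≫ ρ = e := by rw [hιρ]; exact hPO.inr_desc _ _ _
    -- `in₀ ≫ ι` is an acyclic cofibration
    have hacyc : IsAcyclicCof Cof Fib (in₀ ≫ ι) := by
      refine acyclicCof_of_comp hWM (in₀ ≫ ι) ρ (hWM.cofClass.comp_mem _ _ hin₀ hι)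
        hρ ?_ hB hCylc hCylf hDc
      have : (in₀ ≫ ι) ≫ ρ = e := by rw [Category.assoc]; exact hfac0
      rw [this]; exact he
    set W : RelWeakCylinder Cof Fib i :=
      { BB := BB, in₀ := in₀, in₁ := in₁, isPushout := hPO, Cyl := Cyl, D := D,
        ι := ι, ρ := ρ, e := e, ι_cof := hι, in₀_ι_acyclic := hacyc,
        e_acyclic := he, fac₀ := hfac0, fac₁ := hfac1 } with hWdef
    -- a map `t : D ⟶ Y` extending `v ≫ p` along `e`
    haveI := he.2 (terminal.from Y) hY hY hWM.fibClass.terminal_fibrant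
    have sqt : CommSq (v ≫ p) e (terminal.from Y) (terminal.from D) :=
      ⟨terminal.hom_ext _ _⟩
    obtain ⟨t, ht1⟩ : ∃ t : D ⟶ Y, e ≫ t = v ≫ p := ⟨sqt.lift, sqt.fac_left⟩
    refine ⟨v, hv1, W, ρ ≫ t, ?_, ?_⟩
    · show in₀ ≫ ι ≫ ρ ≫ t = v ≫ p
      rw [← Category.assoc ι ρ t, ← Category.assoc, hfac0, ht1]
    · show in₁ ≫ ι ≫ ρ ≫ t = y
      rw [← Category.assoc ι ρ t, ← Category.assoc, hfac1, ht1, hv2]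
  · intro hw
    constructor
    intro u g sq
    obtain ⟨v, hvi, W, h, h0, h1⟩ := hw u g sq.w
    haveI := W.in₀_ι_acyclic.2 p hp hX hY
    have sq2 : CommSq v (W.in₀ ≫ W.ι) p h := ⟨by rw [Category.assoc]; exact h0.symm⟩
    obtain ⟨K, hK1, hK2⟩ : ∃ K : W.Cyl ⟶ X, (W.in₀ ≫ W.ι) ≫ K = v ∧ K ≫ p = h :=
      ⟨sq2.lift, sq2.fac_left, sq2.fac_right⟩
    constructor
    refine ⟨⟨W.in₁ ≫ W.ι ≫ K, ?_, ?_⟩⟩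
    · have hwpo : i ≫ W.in₀ = i ≫ W.in₁ := W.isPushout.w
      rw [← Category.assoc, ← hwpo, Category.assoc, ← Category.assoc W.in₀ W.ι K, hK1, hvi]
    · rw [Category.assoc, Category.assoc, hK2]
      rw [← Category.assoc] at h1 ⊢
      exact h1

end WMC
end

section
/- In the simplex category Δ, any pair of epimorphisms s : [n] → [i] and t : [n] → [j] admits a pushout; the two structural maps [i] → [k] and [j] → [k] of this pushout are again epimorphisms; and the pushout square is absolute, i.e. its image under every functor from Δ to any category is again a pushout square. -/
open CategoryTheory CategoryTheory.Limits

universe v' u'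

namespace Statement14Aux

open SimplexCategory

/-- Absolute pushout in the simplex category. -/
structure AbsPO {W X Y Z : SimplexCategory} (s : W ⟶ X) (t : W ⟶ Y) (u : X ⟶ Z) (v : Y ⟶ Z) :
    Prop where
  isPushout : ∀ {D : Type u'} [Category.{v'} D] (F : SimplexCategory ⥤ D),
    IsPushout (F.map s) (F.map t) (F.map u) (F.map v)

lemma absPO_id_left {W Y : SimplexCategory} (t : W ⟶ Y) :
    AbsPO.{v', u'} (𝟙 W) t t (𝟙 Y) := by
  constructor
  intro D _ F
  rw [F.map_id, F.map_id]
  exact IsPushout.of_id_fst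

lemma absPO_id_right {W X : SimplexCategory} (s : W ⟶ X) :
    AbsPO.{v', u'} s (𝟙 W) (𝟙 X) s := by
  constructor
  intro D _ F
  rw [F.map_id, F.map_id]
  exact IsPushout.of_id_snd

lemma absPO_flip {W X Y Z : SimplexCategory} {s : W ⟶ X} {t : W ⟶ Y} {u : X ⟶ Z} {v : Y ⟶ Z}
    (h : AbsPO.{v', u'} s t u v) : AbsPO.{v', u'} t s v u :=
  ⟨fun F => (h.isPushout F).flip⟩

lemma absPO_pasteVert {W X Y Z Y' Z' : SimplexCategory}
    {f : W ⟶ X} {g : W ⟶ Y} {inl : X ⟶ Z} {inr : Y ⟶ Z}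
    {g' : Y ⟶ Y'} {inl' : Z ⟶ Z'} {inr' : Y' ⟶ Z'}
    (h₁ : AbsPO.{v', u'} f g inl inr) (h₂ : AbsPO.{v', u'} inr g' inl' inr') :
    AbsPO.{v', u'} f (g ≫ g') (inl ≫ inl') inr' := by
  constructor
  intro D _ F
  rw [F.map_comp, F.map_comp]
  exact (h₁.isPushout F).paste_vert (h₂.isPushout F)

/-- The pushout of an epimorphism along itself. -/
lemma isPushout_self_of_epi {D : Type u'} [Category.{v'} D] {X Y : D} (f : X ⟶ Y) [Epi f] :
    IsPushout f f (𝟙 Y) (𝟙 Y) :=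
  IsPushout.of_isColimit <| PushoutCocone.IsColimit.mk rfl
    (fun s => s.inl)
    (fun s => Category.id_comp _)
    (fun s => by
      rw [Category.id_comp, ← cancel_epi f]
      exact s.condition)
    (fun s m h₁ _ => by simpa using h₁)

/-- Atomic case, equal indices. -/
lemma absPO_sigma_self {n : ℕ} (a : Fin (n + 1)) :
    AbsPO.{v', u'} (σ a) (σ a) (𝟙 (mk n)) (𝟙 (mk n)) := by
  constructor
  intro D _ F
  have hsp : SplitEpi (F.map (σ a)) :=
    ⟨F.map (δ a.castSucc), by rw [← F.map_comp, δ_comp_σ_self, F.map_id]⟩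
  haveI : IsSplitEpi (F.map (σ a)) := ⟨⟨hsp⟩⟩
  rw [F.map_id]
  exact isPushout_self_of_epi _

/-- Atomic case, distinct indices. -/
lemma absPO_sigma_sigma {n : ℕ} (i j : Fin (n + 1)) (H : i ≤ j) :
    AbsPO.{v', u'} (σ i.castSucc) (σ j.succ) (σ j) (σ i) := by
  constructor
  intro D _ F
  have w' : F.map (σ (Fin.castSucc i)) ≫ F.map (σ j) = F.map (σ j.succ) ≫ F.map (σ i) := by
    rw [← F.map_comp, ← F.map_comp, σ_comp_σ H]
  have e1 : σ j ≫ δ i.castSucc = δ (i.castSucc).castSucc ≫ σ j.succ :=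
    (δ_comp_σ_of_le (Fin.castSucc_le_castSucc_iff.mpr H)).symm
  have hgt : (Fin.castSucc i) < j.succ :=
    lt_of_le_of_lt (Fin.castSucc_le_castSucc_iff.mpr H) (Fin.castSucc_lt_succ : Fin.castSucc j < j.succ)
  have e2 : δ (j.succ).succ ≫ σ i.castSucc = σ i ≫ δ j.succ := δ_comp_σ_of_gt hgt
  refine IsPushout.of_isColimit <| PushoutCocone.IsColimit.mk w'
    (fun s => F.map (δ i.castSucc) ≫ s.inr) ?_ ?_ ?_
  · -- fac_left
    intro s
    show F.map (σ j) ≫ F.map (δ i.castSucc) ≫ s.inr = s.inl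
    calc F.map (σ j) ≫ F.map (δ i.castSucc) ≫ s.inr
        = F.map (δ (i.castSucc).castSucc) ≫ F.map (σ j.succ) ≫ s.inr := by
          rw [← Category.assoc, ← F.map_comp, e1, F.map_comp, Category.assoc]
      _ = F.map (δ (i.castSucc).castSucc) ≫ F.map (σ i.castSucc) ≫ s.inl := by
          rw [← s.condition]
      _ = s.inl := by
          rw [← Category.assoc, ← F.map_comp, δ_comp_σ_self, F.map_id, Category.id_comp]
  · -- fac_right
    intro s
    show F.map (σ i) ≫ F.map (δ i.castSucc) ≫ s.inr = s.inr
    have key : F.map (δ i.castSucc) ≫ s.inr = F.map (δ j.succ) ≫ s.inl := by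
      calc F.map (δ i.castSucc) ≫ s.inr
          = F.map (δ i.castSucc) ≫ F.map (δ (j.succ).succ ≫ σ j.succ) ≫ s.inr := by
            rw [δ_comp_σ_succ, F.map_id, Category.id_comp]
        _ = F.map (δ i.castSucc) ≫ F.map (δ (j.succ).succ) ≫ F.map (σ j.succ) ≫ s.inr := by
            rw [F.map_comp, Category.assoc]
        _ = F.map (δ i.castSucc) ≫ F.map (δ (j.succ).succ) ≫ F.map (σ i.castSucc) ≫ s.inl := by
            rw [s.condition]
        _ = F.map (δ i.castSucc) ≫ F.map (δ (j.succ).succ ≫ σ i.castSucc) ≫ s.inl := by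
            rw [F.map_comp, Category.assoc]
        _ = F.map (δ i.castSucc) ≫ F.map (σ i ≫ δ j.succ) ≫ s.inl := by rw [e2]
        _ = F.map (δ i.castSucc) ≫ F.map (σ i) ≫ F.map (δ j.succ) ≫ s.inl := by
            rw [F.map_comp, Category.assoc]
        _ = F.map (δ i.castSucc ≫ σ i) ≫ F.map (δ j.succ) ≫ s.inl := by
            rw [F.map_comp, Category.assoc]
        _ = F.map (δ j.succ) ≫ s.inl := by
            rw [δ_comp_σ_self, F.map_id, Category.id_comp]
    rw [key]
    calc F.map (σ i) ≫ F.map (δ j.succ) ≫ s.inl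
        = F.map (σ i ≫ δ j.succ) ≫ s.inl := by rw [F.map_comp, Category.assoc]
      _ = F.map (δ (j.succ).succ) ≫ F.map (σ i.castSucc) ≫ s.inl := by
          rw [← e2, F.map_comp, Category.assoc]
      _ = F.map (δ (j.succ).succ) ≫ F.map (σ j.succ) ≫ s.inr := by rw [s.condition]
      _ = F.map (δ (j.succ).succ ≫ σ j.succ) ≫ s.inr := by rw [F.map_comp, Category.assoc]
      _ = s.inr := by rw [δ_comp_σ_succ, F.map_id, Category.id_comp]
  · -- uniqueness
    intro s m _ h₂
    show m = F.map (δ i.castSucc) ≫ s.inr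
    calc m = F.map (δ i.castSucc ≫ σ i) ≫ m := by rw [δ_comp_σ_self, F.map_id, Category.id_comp]
      _ = F.map (δ i.castSucc) ≫ F.map (σ i) ≫ m := by rw [F.map_comp, Category.assoc]
      _ = F.map (δ i.castSucc) ≫ s.inr := by rw [h₂]

/-- Atomic case, strict inequality, stated for direct application. -/
lemma absPO_sigma_sigma' {n : ℕ} (a b : Fin (n + 2)) (hab : a < b) :
    AbsPO.{v', u'} (σ a) (σ b) (σ (b.pred (Fin.ne_zero_of_lt hab)))
      (σ (a.castPred (Fin.ne_last_of_lt hab))) := by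
  have ha := Fin.ne_last_of_lt hab
  have hb := Fin.ne_zero_of_lt hab
  have hij : a.castPred ha ≤ b.pred hb := by
    rw [Fin.le_def]
    have := Fin.lt_def.mp hab
    simp only [Fin.coe_castPred, Fin.coe_pred]
    omega
  have h := absPO_sigma_sigma.{v', u'} (a.castPred ha) (b.pred hb) hij
  rwa [Fin.castSucc_castPred, Fin.succ_pred] at h

lemma not_injective_of_epi {m : ℕ} {y : SimplexCategory} (t : mk m ⟶ y)
    (hlt : y.len < m) : ¬ Function.Injective t.toOrderHom := by
  intro hinj
  have : Mono t := mono_iff_injective.mpr hinj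
  have := len_le_of_mono t
  simp only [len_mk] at this
  omega

/-- Pushout of a single degeneracy along an arbitrary epi. -/
lemma lemA : ∀ (m : ℕ) (a : Fin (m + 1)) (y : SimplexCategory) (t : mk (m + 1) ⟶ y),
    Epi t → ∃ (k : SimplexCategory) (u : mk m ⟶ k) (v : y ⟶ k),
      Epi u ∧ Epi v ∧ AbsPO.{v', u'} (σ a) t u v := by
  intro m
  induction m with
  | zero =>
    intro a y t ht
    have hy : y.len ≤ 1 := by simpa using len_le_of_epi t
    rcases Nat.lt_or_ge y.len 1 with h1 | h1
    · obtain ⟨b, t', rfl⟩ := eq_σ_comp_of_not_injective t (not_injective_of_epi t (by omega))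
      haveI : Epi (σ b ≫ t') := ht
      haveI ht' : Epi t' := epi_of_epi (σ b) t'
      obtain rfl : a = b := by
        apply Fin.ext
        omega
      refine ⟨y, t', 𝟙 y, ht', inferInstance, ?_⟩
      have h := absPO_pasteVert.{v', u'} (absPO_sigma_self.{v', u'} a) (absPO_id_left.{v', u'} t')
      simpa using h
    · obtain rfl : y = mk 1 := by
        have h2 : y.len = 1 := le_antisymm hy h1
        rw [← h2, mk_len]
      haveI := ht
      obtain rfl : t = 𝟙 _ := eq_id_of_epi t
      exact ⟨mk 0, 𝟙 _, σ a, inferInstance, inferInstance, absPO_id_right.{v', u'} (σ a)⟩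
  | succ n ih =>
    intro a y t ht
    have hy : y.len ≤ n + 2 := by simpa using len_le_of_epi t
    rcases Nat.lt_or_ge y.len (n + 2) with h1 | h1
    · obtain ⟨b, t', rfl⟩ := eq_σ_comp_of_not_injective t (not_injective_of_epi t (by omega))
      haveI : Epi (σ b ≫ t') := ht
      haveI ht' : Epi t' := epi_of_epi (σ b) t'
      rcases lt_trichotomy a b with hab | hab | hab
      · -- a < b
        have atom := absPO_sigma_sigma'.{v', u'} a b hab
        obtain ⟨k, u₂, v₂, hu₂, hv₂, habs⟩ := ih (a.castPred (Fin.ne_last_of_lt hab)) y t' ht'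
        exact ⟨k, σ (b.pred (Fin.ne_zero_of_lt hab)) ≫ u₂, v₂, epi_comp _ _, hv₂,
          absPO_pasteVert.{v', u'} atom habs⟩
      · -- a = b
        subst hab
        refine ⟨y, t', 𝟙 y, ht', inferInstance, ?_⟩
        have h := absPO_pasteVert.{v', u'} (absPO_sigma_self.{v', u'} a)
          (absPO_id_left.{v', u'} t')
        simpa using h
      · -- b < a
        have atom := absPO_flip.{v', u'} (absPO_sigma_sigma'.{v', u'} b a hab)
        obtain ⟨k, u₂, v₂, hu₂, hv₂, habs⟩ := ih (a.pred (Fin.ne_zero_of_lt hab)) y t' ht'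
        exact ⟨k, σ (b.castPred (Fin.ne_last_of_lt hab)) ≫ u₂, v₂, epi_comp _ _, hv₂,
          absPO_pasteVert.{v', u'} atom habs⟩
    · obtain rfl : y = mk (n + 2) := by
        have h2 : y.len = n + 2 := le_antisymm hy h1
        rw [← h2, mk_len]
      haveI := ht
      obtain rfl : t = 𝟙 _ := eq_id_of_epi t
      exact ⟨mk (n + 1), 𝟙 _, σ a, inferInstance, inferInstance, absPO_id_right.{v', u'} (σ a)⟩

/-- Pushout of two arbitrary epis. -/
lemma lemB : ∀ (m : ℕ) (x y : SimplexCategory) (s : mk m ⟶ x) (t : mk m ⟶ y),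
    Epi s → Epi t → ∃ (k : SimplexCategory) (u : x ⟶ k) (v : y ⟶ k),
      Epi u ∧ Epi v ∧ AbsPO.{v', u'} s t u v := by
  intro m
  induction m with
  | zero =>
    intro x y s t hs ht
    obtain rfl : x = mk 0 := by
      have h1 := len_le_of_epi s
      simp only [len_mk] at h1
      rw [← mk_len x]
      congr 1
      omega
    haveI := hs
    obtain rfl : s = 𝟙 _ := eq_id_of_epi s
    exact ⟨y, t, 𝟙 y, ht, inferInstance, absPO_id_left.{v', u'} t⟩
  | succ n ih =>
    intro x y s t hs ht
    have hx : x.len ≤ n + 1 := by simpa using len_le_of_epi s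
    rcases Nat.lt_or_ge x.len (n + 1) with h1 | h1
    · obtain ⟨a, s', rfl⟩ := eq_σ_comp_of_not_injective s (not_injective_of_epi s (by omega))
      haveI : Epi (σ a ≫ s') := hs
      haveI hs' : Epi s' := epi_of_epi (σ a) s'
      obtain ⟨k₁, u₁, v₁, hu₁, hv₁, habs₁⟩ := lemA.{v', u'} n a y t ht
      obtain ⟨k, u₂, v₂, hu₂, hv₂, habs₂⟩ := ih x k₁ s' u₁ hs' hu₁
      refine ⟨k, u₂, v₁ ≫ v₂, hu₂, epi_comp _ _, ?_⟩
      exact absPO_flip.{v', u'}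
        (absPO_pasteVert.{v', u'} (absPO_flip.{v', u'} habs₁) (absPO_flip.{v', u'} habs₂))
    · obtain rfl : x = mk (n + 1) := by
        have h2 : x.len = n + 1 := le_antisymm hx h1
        rw [← h2, mk_len]
      haveI := hs
      obtain rfl : s = 𝟙 _ := eq_id_of_epi s
      exact ⟨y, t, 𝟙 y, ht, inferInstance, absPO_id_left.{v', u'} t⟩

end Statement14Aux

/-- in the simplex category, any pair of epimorphisms out of a common
object admits a pushout whose structural maps are again epimorphisms, and this pushout
is absolute: its image under any functor to any category is again a pushout square. -/
theorem statement14 {n i j : ℕ}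
    (s : SimplexCategory.mk n ⟶ SimplexCategory.mk i)
    (t : SimplexCategory.mk n ⟶ SimplexCategory.mk j)
    (hs : Epi s) (ht : Epi t) :
    ∃ (k : SimplexCategory) (u : SimplexCategory.mk i ⟶ k) (v : SimplexCategory.mk j ⟶ k),
      Epi u ∧ Epi v ∧
      ∀ {D : Type u'} [Category.{v'} D] (F : SimplexCategory ⥤ D),
        IsPushout (F.map s) (F.map t) (F.map u) (F.map v) := by
  obtain ⟨k, u, v, hu, hv, habs⟩ :=
    Statement14Aux.lemB.{v', u'} n (SimplexCategory.mk i) (SimplexCategory.mk j) s t hs ht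
  exact ⟨k, u, v, hu, hv, fun F => habs.isPushout F⟩
end

section
/- For 0 < i < n, the inner horn inclusion Λ[n, i] → Δ[n] is a retract, in the arrow category of simplicial sets, of the pushout-product (with respect to the cartesian product) of the inner horn inclusion Λ[2, 1] → Δ[2] with Λ[n, i] → Δ[n]. -/
open CategoryTheory CategoryTheory.Limits Simplicial

namespace SSetStmt

/-- The pushout-product (corner-product) of two morphisms with respect to the
cartesian product. -/
noncomputable def ppCart {D : Type*} [Category D] [HasBinaryProducts D] [HasPushouts D]
    {A B X Y : D} (f : A ⟶ B) (g : X ⟶ Y) :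
    pushout (prod.map (𝟙 A) g) (prod.map f (𝟙 X)) ⟶ B ⨯ Y :=
  pushout.desc (prod.map f (𝟙 Y)) (prod.map (𝟙 B) g) (by
    rw [prod.map_map, prod.map_map, Category.id_comp, Category.id_comp,
      Category.comp_id, Category.comp_id])

/-- `Rlp S`: morphisms with the right lifting property against every member of `S`. -/
def Rlp {D : Type*} [Category D] (S : MorphismProperty D) : MorphismProperty D :=
  fun _ _ p => ∀ ⦃A B : D⦄ (i : A ⟶ B), S i → HasLiftingProperty i p

/-- `Llp S`: morphisms with the left lifting property against every member of `S`. -/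
def Llp {D : Type*} [Category D] (S : MorphismProperty D) : MorphismProperty D :=
  fun _ _ i => ∀ ⦃X Y : D⦄ (p : X ⟶ Y), S p → HasLiftingProperty i p

/-- `f` is a retract of `g` in the arrow category. -/
def ArrowRetract {D : Type*} [Category D] {X Y X' Y' : D} (f : X ⟶ Y) (g : X' ⟶ Y') : Prop :=
  ∃ (u : Arrow.mk f ⟶ Arrow.mk g) (r : Arrow.mk g ⟶ Arrow.mk f), u ≫ r = 𝟙 (Arrow.mk f)

/-! ### Auxiliary constructions -/

section Aux

universe u

/-- A morphism out of a binary product of simplicial sets, defined from a pointwise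
natural family of maps. -/
noncomputable def prodHom {A B C : SSet.{u}} (φ : ∀ m, A.obj m → B.obj m → C.obj m)
    (hφ : ∀ {m m' : SimplexCategoryᵒᵖ} (g : m ⟶ m') (a : A.obj m) (b : B.obj m),
      C.map g (φ m a b) = φ m' (A.map g a) (B.map g b)) : A ⨯ B ⟶ C where
  app m := TypeCat.ofHom fun x => φ m ((prod.fst : A ⨯ B ⟶ A).app m x) ((prod.snd : A ⨯ B ⟶ B).app m x)
  naturality m m' g := by
    apply ConcreteCategory.hom_ext; intro x
    have h1 := ConcreteCategory.congr_hom ((prod.fst : A ⨯ B ⟶ A).naturality g) x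
    have h2 := ConcreteCategory.congr_hom ((prod.snd : A ⨯ B ⟶ B).naturality g) x
    dsimp at h1 h2 ⊢
    rw [h1, h2, hφ]

lemma comp_prodHom_app {Z A B C : SSet.{u}} (h : Z ⟶ A ⨯ B)
    (φ : ∀ m, A.obj m → B.obj m → C.obj m) (hφ) (m : SimplexCategoryᵒᵖ) (z : Z.obj m) :
    (h ≫ prodHom φ hφ).app m z =
      φ m ((h ≫ prod.fst).app m z) ((h ≫ prod.snd).app m z) := rfl

variable (n : ℕ) (i : Fin (n + 1))

/-- The map `[n] → [2]` sending `j < i` to 0, `i` to 1, `j > i` to 2. -/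
def sigFn (j : Fin (n + 1)) : Fin 3 :=
  ⟨if (j : ℕ) < i then 0 else if (j : ℕ) = i then 1 else 2, by split_ifs <;> first | omega | exact False.elim (by assumption)⟩

lemma sigFn_mono : Monotone (sigFn n i) := by
  intro a b hab
  simp only [sigFn, Fin.mk_le_mk]
  have : (a : ℕ) ≤ b := hab
  split_ifs <;> first | omega | exact False.elim (by assumption)

/-- The retraction map `[2] × [n] → [n]`. -/
def rhoFn (c : Fin 3) (a : Fin (n + 1)) : Fin (n + 1) :=
  ⟨if (c : ℕ) = 0 then (if (a : ℕ) ≤ i then (a : ℕ) else i)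
    else if (c : ℕ) = 1 then (i : ℕ) else (if (a : ℕ) ≤ i then (i : ℕ) else a), by
    have ha := a.isLt
    have hi := i.isLt
    split_ifs <;> first | omega | exact False.elim (by assumption)⟩

lemma rhoFn_val (c : Fin 3) (a : Fin (n + 1)) :
    (rhoFn n i c a : ℕ) =
      if (c : ℕ) = 0 then (if (a : ℕ) ≤ i then (a : ℕ) else i)
        else if (c : ℕ) = 1 then (i : ℕ) else (if (a : ℕ) ≤ i then (i : ℕ) else a) :=
  rfl

lemma sigFn_val (j : Fin (n + 1)) :
    (sigFn n i j : ℕ) = if (j : ℕ) < i then 0 else if (j : ℕ) = i then 1 else 2 :=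
  rfl

lemma rhoFn_mono {c c' : Fin 3} {a a' : Fin (n + 1)} (hc : c ≤ c') (ha : a ≤ a') :
    rhoFn n i c a ≤ rhoFn n i c' a' := by
  have hc' : (c : ℕ) ≤ c' := hc
  have ha' : (a : ℕ) ≤ a' := ha
  rw [Fin.le_def, rhoFn_val, rhoFn_val]
  split_ifs <;> first | omega | exact False.elim (by assumption)

lemma rhoFn_sigFn (a : Fin (n + 1)) : rhoFn n i (sigFn n i a) a = a := by
  apply Fin.ext
  rw [rhoFn_val, sigFn_val]
  split_ifs <;> first | omega | exact False.elim (by assumption)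

lemma rhoFn_mem (c : Fin 3) (a : Fin (n + 1)) :
    rhoFn n i c a = a ∨ rhoFn n i c a = i := by
  simp only [Fin.ext_iff, rhoFn_val]
  split_ifs <;> first | omega | exact False.elim (by assumption)

lemma rhoFn_le {c : Fin 3} (hc : (c : ℕ) ≠ 2) (a : Fin (n + 1)) :
    (rhoFn n i c a : ℕ) ≤ i := by
  have h3 := c.isLt
  rw [rhoFn_val]
  split_ifs <;> first | omega | exact False.elim (by assumption)

lemma rhoFn_ge {c : Fin 3} (hc : (c : ℕ) ≠ 0) (a : Fin (n + 1)) :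
    (i : ℕ) ≤ rhoFn n i c a := by
  rw [rhoFn_val]
  split_ifs <;> first | omega | exact False.elim (by assumption)

/-- The simplicial map `Δ[n] ⟶ Δ[2]` induced by `sigFn`. -/
def sig : (Δ[n] : SSet.{u}) ⟶ Δ[2] where
  app m := TypeCat.ofHom fun x => SSet.stdSimplex.objMk
    ⟨fun j => sigFn n i (SSet.stdSimplex.asOrderHom x j),
      fun _ _ h => sigFn_mono n i ((SSet.stdSimplex.asOrderHom x).monotone h)⟩
  naturality m m' g := rfl

/-- The pointwise retraction `Δ[2].obj m → Δ[n].obj m → Δ[n].obj m`. -/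
def rhoObj (m : SimplexCategoryᵒᵖ) (k : (Δ[2] : SSet.{u}).obj m) (x : (Δ[n] : SSet.{u}).obj m) :
    (Δ[n] : SSet.{u}).obj m :=
  SSet.stdSimplex.objMk
    ⟨fun j => rhoFn n i (SSet.stdSimplex.asOrderHom k j) (SSet.stdSimplex.asOrderHom x j),
      fun _ _ h => rhoFn_mono n i ((SSet.stdSimplex.asOrderHom k).monotone h)
        ((SSet.stdSimplex.asOrderHom x).monotone h)⟩

lemma rhoObj_natural {m m' : SimplexCategoryᵒᵖ} (g : m ⟶ m') (k : (Δ[2] : SSet.{u}).obj m)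
    (x : (Δ[n] : SSet.{u}).obj m) :
    (Δ[n] : SSet.{u}).map g (rhoObj n i m k x) = rhoObj n i m' (Δ[2].map g k) (Δ[n].map g x) :=
  rfl

/-- The retraction `Δ[2] ⨯ Δ[n] ⟶ Δ[n]`. -/
noncomputable def rho : (Δ[2] : SSet.{u}) ⨯ Δ[n] ⟶ Δ[n] :=
  prodHom (rhoObj n i) (rhoObj_natural n i)

/-- A vertex missing from the image of a horn simplex. -/
lemma horn_exists_missing {N : ℕ} {I : Fin (N + 1)} {m : SimplexCategoryᵒᵖ}
    (x : (Λ[N, I] : SSet.{u}).obj m) :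
    ∃ v : Fin (N + 1), v ≠ I ∧ ∀ j, SSet.stdSimplex.asOrderHom x.1 j ≠ v := by
  have hx := (SSet.mem_horn_iff _ _).1 x.2
  rw [Set.ne_univ_iff_exists_notMem] at hx
  obtain ⟨v, hv⟩ := hx
  simp only [Set.mem_union, Set.mem_range, Set.mem_singleton_iff, not_or, not_exists] at hv
  exact ⟨v, hv.2, fun j h => hv.1 j h⟩

lemma horn_mem_of_missing {N : ℕ} {I : Fin (N + 1)} {m : SimplexCategoryᵒᵖ}
    (x : (Δ[N] : SSet.{u}).obj m) (v : Fin (N + 1)) (hvI : v ≠ I)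
    (h : ∀ j, SSet.stdSimplex.asOrderHom x j ≠ v) :
    Set.range (SSet.stdSimplex.asOrderHom x) ∪ {I} ≠ Set.univ := by
  rw [Set.ne_univ_iff_exists_notMem]
  refine ⟨v, ?_⟩
  simp only [Set.mem_union, Set.mem_range, Set.mem_singleton_iff, not_or, not_exists]
  exact ⟨fun j hj => h j hj, hvI⟩

/-- Pointwise map `Λ[2,1].obj m → Δ[n].obj m → Λ[n,i].obj m`. -/
def rhoAY (h0 : 0 < (i : ℕ)) (hn : (i : ℕ) < n) (m : SimplexCategoryᵒᵖ)
    (k : (Λ[2, 1] : SSet.{u}).obj m) (x : (Δ[n] : SSet.{u}).obj m) :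
    (Λ[n, i] : SSet.{u}).obj m := by
  refine ⟨rhoObj n i m k.1 x, ?_⟩
  obtain ⟨w, hw1, hw⟩ := horn_exists_missing k
  have hkey : ∀ j, SSet.stdSimplex.asOrderHom (rhoObj n i m k.1 x) j
      = rhoFn n i (SSet.stdSimplex.asOrderHom k.1 j) (SSet.stdSimplex.asOrderHom x j) := fun _ => rfl
  have hw' : (w : ℕ) = 0 ∨ (w : ℕ) = 2 := by
    have h3 := w.isLt
    have h4 : (w : ℕ) ≠ 1 := fun h => hw1 (Fin.ext h)
    omega
  rcases hw' with hw0 | hw2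
  · refine horn_mem_of_missing _ ⟨0, Nat.succ_pos n⟩
      (fun h => by have h5 : (0 : ℕ) = (i : ℕ) := congrArg Fin.val h; omega) (fun j hj => ?_)
    rw [hkey] at hj
    have hk : (SSet.stdSimplex.asOrderHom k.1 j : ℕ) ≠ 0 := fun h => hw j (Fin.ext (h.trans hw0.symm))
    have h1 := rhoFn_ge n i hk (SSet.stdSimplex.asOrderHom x j)
    have h2 : (rhoFn n i (SSet.stdSimplex.asOrderHom k.1 j) (SSet.stdSimplex.asOrderHom x j) : ℕ) = 0 :=
      congrArg Fin.val hj
    omega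
  · refine horn_mem_of_missing _ ⟨n, Nat.lt_succ_self n⟩
      (fun h => by have h5 : (n : ℕ) = (i : ℕ) := congrArg Fin.val h; omega) (fun j hj => ?_)
    rw [hkey] at hj
    have hk : (SSet.stdSimplex.asOrderHom k.1 j : ℕ) ≠ 2 := fun h => hw j (Fin.ext (h.trans hw2.symm))
    have h1 := rhoFn_le n i hk (SSet.stdSimplex.asOrderHom x j)
    have h2 : (rhoFn n i (SSet.stdSimplex.asOrderHom k.1 j) (SSet.stdSimplex.asOrderHom x j) : ℕ) = n :=
      congrArg Fin.val hj
    omega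

/-- Pointwise map `Δ[2].obj m → Λ[n,i].obj m → Λ[n,i].obj m`. -/
def rhoBX (m : SimplexCategoryᵒᵖ) (k : (Δ[2] : SSet.{u}).obj m)
    (x : (Λ[n, i] : SSet.{u}).obj m) : (Λ[n, i] : SSet.{u}).obj m := by
  refine ⟨rhoObj n i m k x.1, ?_⟩
  obtain ⟨v, hv1, hv⟩ := horn_exists_missing x
  refine horn_mem_of_missing _ v hv1 (fun j hj => ?_)
  rcases rhoFn_mem n i (SSet.stdSimplex.asOrderHom k j) (SSet.stdSimplex.asOrderHom x.1 j) with h | h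
  · exact hv j (by rw [← h]; exact hj)
  · exact hv1 (by rw [← hj]; exact h)

/-- `Λ[2,1] ⨯ Δ[n] ⟶ Λ[n,i]` part of the retraction. -/
noncomputable def rAY (h0 : 0 < (i : ℕ)) (hn : (i : ℕ) < n) :
    (Λ[2, 1] : SSet.{u}) ⨯ Δ[n] ⟶ Λ[n, i] :=
  prodHom (rhoAY n i h0 hn) (fun g a b => Subtype.ext (rhoObj_natural n i g a.1 b))

/-- `Δ[2] ⨯ Λ[n,i] ⟶ Λ[n,i]` part of the retraction. -/
noncomputable def rBX : (Δ[2] : SSet.{u}) ⨯ Λ[n, i] ⟶ Λ[n, i] :=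
  prodHom (rhoBX n i) (fun g a b => Subtype.ext (rhoObj_natural n i g a b.1))


lemma desc_compat (h0 : 0 < (i : ℕ)) (hn : (i : ℕ) < n) :
    prod.map (𝟙 (Λ[2, 1] : SSet.{u})) ((SSet.horn n i).ι) ≫ rAY n i h0 hn =
      prod.map ((SSet.horn 2 1).ι) (𝟙 (Λ[n, i] : SSet.{u})) ≫ rBX n i := by
  apply SSet.hom_ext; intro m; apply ConcreteCategory.hom_ext; intro z
  simp only [rAY, rBX]
  erw [comp_prodHom_app, comp_prodHom_app]
  have e1 : (prod.map (𝟙 (Λ[2,1] : SSet.{u})) ((SSet.horn n i).ι) ≫ prod.fst)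
      = prod.fst := by simp
  have e2 : (prod.map (𝟙 (Λ[2,1] : SSet.{u})) ((SSet.horn n i).ι) ≫ prod.snd)
      = prod.snd ≫ (SSet.horn n i).ι := by simp
  have e3 : (prod.map ((SSet.horn 2 1).ι) (𝟙 (Λ[n,i] : SSet.{u})) ≫ prod.fst)
      = prod.fst ≫ (SSet.horn 2 1).ι := by simp
  have e4 : (prod.map ((SSet.horn 2 1).ι) (𝟙 (Λ[n,i] : SSet.{u})) ≫ prod.snd)
      = prod.snd := by simp
  rw [e1, e2, e3, e4]
  rfl

lemma sq_r_l (h0 : 0 < (i : ℕ)) (hn : (i : ℕ) < n) :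
    prod.map ((SSet.horn 2 1).ι) (𝟙 (Δ[n] : SSet.{u})) ≫ rho n i =
      rAY n i h0 hn ≫ (SSet.horn n i).ι := by
  apply SSet.hom_ext; intro m; apply ConcreteCategory.hom_ext; intro z
  simp only [rho, rAY]
  rw [comp_prodHom_app]
  have e1 : (prod.map ((SSet.horn 2 1).ι) (𝟙 (Δ[n] : SSet.{u})) ≫ prod.fst)
      = prod.fst ≫ (SSet.horn 2 1).ι := by simp
  have e2 : (prod.map ((SSet.horn 2 1).ι) (𝟙 (Δ[n] : SSet.{u})) ≫ prod.snd)
      = prod.snd := by simp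
  rw [e1, e2]
  rfl

lemma sq_r_r (h0 : 0 < (i : ℕ)) (hn : (i : ℕ) < n) :
    prod.map (𝟙 (Δ[2] : SSet.{u})) ((SSet.horn n i).ι) ≫ rho n i =
      rBX n i ≫ (SSet.horn n i).ι := by
  apply SSet.hom_ext; intro m; apply ConcreteCategory.hom_ext; intro z
  simp only [rho, rBX]
  rw [comp_prodHom_app]
  have e1 : (prod.map (𝟙 (Δ[2] : SSet.{u})) ((SSet.horn n i).ι) ≫ prod.fst)
      = prod.fst := by simp
  have e2 : (prod.map (𝟙 (Δ[2] : SSet.{u})) ((SSet.horn n i).ι) ≫ prod.snd)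
      = prod.snd ≫ (SSet.horn n i).ι := by simp
  rw [e1, e2]
  rfl

lemma retract_left (h0 : 0 < (i : ℕ)) (hn : (i : ℕ) < n) :
    prod.lift ((SSet.horn n i).ι ≫ sig n i) (𝟙 (Λ[n, i] : SSet.{u})) ≫ rBX n i
      = 𝟙 (Λ[n, i] : SSet.{u}) := by
  apply SSet.hom_ext; intro m; apply ConcreteCategory.hom_ext; intro z
  simp only [rBX]
  erw [comp_prodHom_app]
  have e1 : (prod.lift ((SSet.horn n i).ι ≫ sig n i) (𝟙 (Λ[n,i] : SSet.{u})) ≫ prod.fst)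
      = (SSet.horn n i).ι ≫ sig n i := prod.lift_fst _ _
  have e2 : (prod.lift ((SSet.horn n i).ι ≫ sig n i) (𝟙 (Λ[n,i] : SSet.{u})) ≫ prod.snd)
      = 𝟙 _ := prod.lift_snd _ _
  rw [e1, e2]
  apply Subtype.ext
  apply SSet.stdSimplex.objEquiv.injective
  apply SimplexCategory.Hom.ext
  ext j
  exact congrArg Fin.val (rhoFn_sigFn n i (SSet.stdSimplex.asOrderHom z.1 j))

lemma retract_right : prod.lift (sig n i) (𝟙 (Δ[n] : SSet.{u})) ≫ rho n i
    = 𝟙 (Δ[n] : SSet.{u}) := by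
  apply SSet.hom_ext; intro m; apply ConcreteCategory.hom_ext; intro z
  simp only [rho]
  rw [comp_prodHom_app]
  have e1 : (prod.lift (sig n i) (𝟙 (Δ[n] : SSet.{u})) ≫ prod.fst) = sig n i := prod.lift_fst _ _
  have e2 : (prod.lift (sig n i) (𝟙 (Δ[n] : SSet.{u})) ≫ prod.snd) = 𝟙 _ := prod.lift_snd _ _
  rw [e1, e2]
  apply SSet.stdSimplex.objEquiv.injective
  apply SimplexCategory.Hom.ext
  ext j
  exact congrArg Fin.val (rhoFn_sigFn n i (SSet.stdSimplex.asOrderHom z j))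

end Aux

/-- for `0 < i < n`, the inner horn inclusion `Λ[n, i] ⟶ Δ[n]` is a
retract, in the arrow category of simplicial sets, of its pushout-product with the inner
horn inclusion `Λ[2, 1] ⟶ Δ[2]`. -/
theorem statement16 (n : ℕ) (i : Fin (n + 1)) (h0 : 0 < (i : ℕ)) (hn : (i : ℕ) < n) :
    ArrowRetract ((SSet.horn n i).ι)
      (ppCart ((SSet.horn 2 1).ι) ((SSet.horn n i).ι)) := by
  refine ⟨Arrow.homMk'
      (u := prod.lift ((SSet.horn n i).ι ≫ sig n i) (𝟙 _) ≫ pushout.inr _ _)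
      (v := prod.lift (sig n i) (𝟙 _)) ?_,
    Arrow.homMk'
      (u := pushout.desc (rAY n i h0 hn) (rBX n i) (desc_compat n i h0 hn))
      (v := rho n i) ?_, ?_⟩
  · -- commutativity of the section square
    rw [Category.assoc]
    simp only [ppCart]
    rw [pushout.inr_desc]
    apply Limits.prod.hom_ext <;> simp
  · -- commutativity of the retraction square
    apply pushout.hom_ext
    · simp only [ppCart, pushout.inl_desc_assoc, pushout.inl_desc]
      exact (sq_r_l n i h0 hn).symm
    · simp only [ppCart, pushout.inr_desc_assoc, pushout.inr_desc]
      exact (sq_r_r n i h0 hn).symm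
  · apply Arrow.hom_ext
    · show (prod.lift ((SSet.horn n i).ι ≫ sig n i) (𝟙 _) ≫ pushout.inr _ _) ≫
        pushout.desc (rAY n i h0 hn) (rBX n i) (desc_compat n i h0 hn) = 𝟙 _
      rw [Category.assoc, pushout.inr_desc]
      exact retract_left n i h0 hn
    · show prod.lift (sig n i) (𝟙 _) ≫ rho n i = 𝟙 _
      exact retract_right n i

end SSetStmt
end
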